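/- arXiv:0909.1175 — 2 statements merged into one kernel-verified Lean document; each statement's English description precedes it below -/
import Mathlib

section
/- Let q be an odd prime power, λ the canonical additive character of F_q, m ≥ 1 an integer, and β ∈ F_q. Define δ(m,q;β) = |{(α₁,…,α_m) ∈ (F_q*)^m : α₁ + α₁⁻¹ + ⋯ + α_m + α_m⁻¹ = β}|. Then Σ_{a∈F_q*} λ(−aβ)·K(λ;a²)^m = q·δ(m,q;β) − (q−1)^m, where K(λ;a) = Σ_{α∈F_q*} λ(α + aα⁻¹). -/
open Finset
open scoped Classical

/-- The Kloosterman sum `K(ψ;a) = ∑_{α ∈ F*} ψ(α + a α⁻¹)`. -/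
noncomputable def Kl {F : Type} [Field F] [Fintype F] (ψ : F → ℂ) (a : F) : ℂ :=
  ∑ α : Fˣ, ψ ((α : F) + a * (α : F)⁻¹)

/-- The canonical additive character `λ(x) = exp(2πi·Tr_{F_q/F_p}(x)/p)`. -/
noncomputable def canCharP (p : ℕ) {F : Type} [Field F] [Fintype F] [Algebra (ZMod p) F]
    (x : F) : ℂ :=
  Complex.exp (2 * Real.pi * Complex.I * ((Algebra.trace (ZMod p) F x).val : ℂ) / p)

/-- `δ(m,q;β) = |{(α₁,…,α_m) ∈ (F*)^m : ∑ (α_j + α_j⁻¹) = β}|`. -/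
noncomputable def deltam {F : Type} [Field F] [Fintype F] (m : ℕ) (β : F) : ℕ :=
  (Finset.univ.filter
    (fun α : Fin m → Fˣ => ∑ j, ((α j : F) + (α j : F)⁻¹) = β)).card

section Aux

variable (p : ℕ) [Fact p.Prime] {F : Type} [Field F] [Fintype F] [Algebra (ZMod p) F]

lemma zetap_pow : Complex.exp (2 * Real.pi * Complex.I / p) ^ p = 1 :=
  (Complex.isPrimitiveRoot_exp p (Fact.out : p.Prime).ne_zero).pow_eq_one

/-- The canonical additive character as an `AddChar`. -/
noncomputable def canAddChar : AddChar F ℂ :=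
  (AddChar.zmodChar p (zetap_pow p)).compAddMonoidHom
    (Algebra.trace (ZMod p) F).toAddMonoidHom

lemma canCharP_eq (x : F) : canCharP p x = canAddChar p x := by
  simp only [canAddChar, AddChar.compAddMonoidHom_apply, AddChar.zmodChar_apply,
    LinearMap.toAddMonoidHom_coe, canCharP]
  rw [← Complex.exp_nat_mul]
  ring_nf

lemma canAddChar_ne_one : (canAddChar p : AddChar F ℂ) ≠ 1 := by
  obtain ⟨x, hx⟩ := Algebra.trace_surjective (ZMod p) F (1 : ZMod p)
  rw [AddChar.ne_one_iff]
  refine ⟨x, ?_⟩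
  simp only [canAddChar, AddChar.compAddMonoidHom_apply, AddChar.zmodChar_apply,
    LinearMap.toAddMonoidHom_coe, hx]
  rw [ZMod.val_one, pow_one]
  exact (Complex.isPrimitiveRoot_exp p (Fact.out : p.Prime).ne_zero).ne_one
    (Fact.out : p.Prime).one_lt

lemma sum_units_eq (f : F → ℂ) : ∑ a : Fˣ, f (a : F) = (∑ a : F, f a) - f 0 := by
  have h : ∑ a : Fˣ, f (a : F) = ∑ x ∈ Finset.univ.erase (0 : F), f x := by
    apply Finset.sum_nbij' (i := fun (a : Fˣ) => (a : F))
      (j := fun x => if hx : x = 0 then 1 else Units.mk0 x hx)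
    · intro a _; exact Finset.mem_erase.mpr ⟨a.ne_zero, Finset.mem_univ _⟩
    · intro x _; exact Finset.mem_univ _
    · intro a _; simp [a.ne_zero]
    · intro x hx; simp [(Finset.mem_erase.mp hx).1]
    · intro a _; rfl
  rw [h, Finset.sum_erase_eq_sub (Finset.mem_univ _)]

lemma sum_char_mul (c : F) :
    ∑ a : F, canAddChar p (a * c) = if c = 0 then (Fintype.card F : ℂ) else 0 := by
  split_ifs with hc
  · simp [hc]
  · have : ∑ a : F, canAddChar p (a * c) = ∑ a : F, canAddChar p a :=
      Fintype.sum_equiv (Equiv.mulRight₀ c hc) _ _ (fun a => rfl)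
    rw [this]
    exact AddChar.sum_eq_zero_of_ne_one (canAddChar_ne_one p)

lemma char_map_sum {ι : Type*} (ψ : AddChar F ℂ) (s : Finset ι) (f : ι → F) :
    ψ (∑ i ∈ s, f i) = ∏ i ∈ s, ψ (f i) := by
  induction s using Finset.cons_induction with
  | empty => simp
  | cons a s ha ih =>
      rw [Finset.sum_cons, Finset.prod_cons, AddChar.map_add_eq_mul, ih]

end Aux

theorem stmt4 (p n : ℕ) [Fact p.Prime] (hp : Odd p) (hn : 0 < n)
    {F : Type} [Field F] [Fintype F] [Algebra (ZMod p) F]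
    (hcard : Fintype.card F = p ^ n)
    (m : ℕ) (hm : 1 ≤ m) (β : F) :
    ∑ a : Fˣ, canCharP p (-(a : F) * β) * (Kl (canCharP p) ((a : F) ^ 2)) ^ m
      = (Fintype.card F : ℂ) * (deltam m β : ℂ) - ((Fintype.card F : ℂ) - 1) ^ m := by
  set ψ : AddChar F ℂ := canAddChar p with hψ
  -- Step 1: rewrite the Kloosterman sum
  have hK : ∀ a : Fˣ, Kl (canCharP p) ((a : F) ^ 2)
      = ∑ α : Fˣ, ψ ((a : F) * ((α : F) + (α : F)⁻¹)) := by
    intro a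
    unfold Kl
    simp only [canCharP_eq]
    refine Fintype.sum_equiv (Equiv.mulLeft a⁻¹) _ _ (fun α => ?_)
    congr 1
    have ha : (a : F) ≠ 0 := a.ne_zero
    have hα : (α : F) ≠ 0 := α.ne_zero
    push_cast [Equiv.coe_mulLeft, Units.val_mul, Units.val_inv_eq_inv_val]
    field_simp
  have key : ∀ a : Fˣ, canCharP p (-(a : F) * β) * (Kl (canCharP p) ((a : F) ^ 2)) ^ m
      = ∑ t : Fin m → Fˣ,
          ψ ((a : F) * ((∑ j, ((t j : F) + (t j : F)⁻¹)) - β)) := by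
    intro a
    rw [hK a, canCharP_eq, Fintype.sum_pow, Finset.mul_sum]
    refine Finset.sum_congr rfl (fun t _ => ?_)
    have : ∏ i : Fin m, ψ ((a : F) * ((t i : F) + (t i : F)⁻¹))
        = ψ (∑ i : Fin m, (a : F) * ((t i : F) + (t i : F)⁻¹)) :=
      (char_map_sum ψ _ _).symm
    rw [this, ← AddChar.map_add_eq_mul]
    congr 1
    rw [← Finset.mul_sum]
    ring
  simp only [key]
  rw [Finset.sum_comm]
  have inner : ∀ t : Fin m → Fˣ,
      ∑ a : Fˣ, ψ ((a : F) * ((∑ j, ((t j : F) + (t j : F)⁻¹)) - β))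
        = (if (∑ j, ((t j : F) + (t j : F)⁻¹)) = β then (Fintype.card F : ℂ) else 0) - 1 := by
    intro t
    rw [sum_units_eq (fun a => ψ (a * ((∑ j, ((t j : F) + (t j : F)⁻¹)) - β)))]
    rw [sum_char_mul p]
    simp only [zero_mul, AddChar.map_zero_eq_one, sub_eq_zero]
  simp only [inner]
  rw [Finset.sum_sub_distrib, Finset.sum_const, Finset.sum_ite, Finset.sum_const,
    Finset.sum_const_zero, add_zero]
  have hδ : (Finset.univ.filter
      (fun t : Fin m → Fˣ => ∑ j, ((t j : F) + (t j : F)⁻¹) = β)).card = deltam m β := by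
    rw [deltam]
  have hcardu : (Fintype.card (Fin m → Fˣ) : ℂ) = ((Fintype.card F : ℂ) - 1) ^ m := by
    rw [Fintype.card_fun, Fintype.card_fin, Fintype.card_units]
    push_cast [Nat.cast_sub Fintype.card_pos]
    ring
  rw [Finset.card_univ, hδ]
  push_cast [hcardu]
  ring_nf
  rw [Fintype.card_fun, Fintype.card_fin, Fintype.card_units] at hcardu ⊢
  push_cast [Nat.cast_sub Fintype.card_pos] at *
  ring_nf
end

section
/- Let q = 3^r and let B ⊆ F_q^n be an F_q-linear code. Then the dual of the restriction of B to F_3 equals the trace of the dual: (B|_{F_3})^⊥ = tr(B^⊥), where B|_{F_3} = B ∩ F_3^n, tr is applied componentwise, and duals are taken with respect to the standard inner products over F_3 and F_q respectively. -/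
open Finset

section Perp
variable {K : Type*} [Field K] {n : ℕ}

/-- The dual (orthogonal complement) of a submodule w.r.t. the dot product. -/
def dotPerp (W : Submodule K (Fin n → K)) : Submodule K (Fin n → K) where
  carrier := {x | ∀ w ∈ W, ∑ i, x i * w i = 0}
  add_mem' {a b} ha hb w hw := by
    simp [add_mul, Finset.sum_add_distrib, ha w hw, hb w hw]
  zero_mem' w hw := by simp
  smul_mem' c a ha w hw := by
    simp only [Pi.smul_apply, smul_eq_mul, mul_assoc, ← Finset.mul_sum, ha w hw, mul_zero]

lemma mem_dotPerp {W : Submodule K (Fin n → K)} {x : Fin n → K} :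
    x ∈ dotPerp W ↔ ∀ w ∈ W, ∑ i, x i * w i = 0 := Iff.rfl

/-- The dot-product pairing as a linear map to the dual. -/
def dotMap : (Fin n → K) →ₗ[K] Module.Dual K (Fin n → K) where
  toFun x := { toFun := fun y => ∑ i, x i * y i
               map_add' := fun a b => by simp [mul_add, Finset.sum_add_distrib]
               map_smul' := fun c a => by
                 simp [Finset.mul_sum, mul_left_comm] }
  map_add' a b := by ext y; simp [add_mul, Finset.sum_add_distrib]
  map_smul' c a := by ext y; simp [Finset.mul_sum, mul_assoc]

lemma dotMap_apply (x y : Fin n → K) : dotMap x y = ∑ i, x i * y i := rfl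

lemma dotMap_surjective : Function.Surjective (dotMap (K := K) (n := n)) := by
  intro φ
  refine ⟨fun i => φ (Pi.single i 1), LinearMap.ext fun y => ?_⟩
  rw [dotMap_apply]
  have : y = ∑ i, Pi.single i (y i) := (Finset.univ_sum_single y).symm
  conv_rhs => rw [this]
  rw [map_sum]
  refine Finset.sum_congr rfl fun i _ => ?_
  have h3 : Pi.single i (y i) = y i • (Pi.single i 1 : Fin n → K) := by
    ext j
    rcases eq_or_ne j i with rfl | hj
    · simp
    · simp [Pi.single_eq_of_ne hj]
  rw [h3, map_smul, smul_eq_mul, mul_comm]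

lemma dotPerp_dotPerp (W : Submodule K (Fin n → K)) : dotPerp (dotPerp W) = W := by
  have h1 : dotPerp W = (W.dualAnnihilator).comap (dotMap (K := K) (n := n)) := by
    ext x
    simp only [mem_dotPerp, Submodule.mem_comap, Submodule.mem_dualAnnihilator]
    exact Iff.rfl
  ext x
  rw [mem_dotPerp]
  constructor
  · intro hx
    have : x ∈ (W.dualAnnihilator).dualCoannihilator := by
      rw [Submodule.mem_dualCoannihilator]
      intro φ hφ
      obtain ⟨y, rfl⟩ := dotMap_surjective φ
      have : y ∈ dotPerp W := by rw [h1]; exact hφ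
      have h2 := hx y this
      rw [dotMap_apply]
      rw [← h2]
      exact Finset.sum_congr rfl fun i _ => mul_comm _ _
    rwa [Subspace.dualAnnihilator_dualCoannihilator_eq] at this
  · intro hx y hy
    have := hy x hx
    rw [← this]
    exact Finset.sum_congr rfl fun i _ => mul_comm _ _

end Perp

theorem stmt12 {F : Type} [Field F] [Fintype F] [Algebra (ZMod 3) F]
    (r : ℕ) (hr : 0 < r) (hcard : Fintype.card F = 3 ^ r)
    (n : ℕ) (B : Submodule F (Fin n → F)) :
    {v : Fin n → ZMod 3 |
        ∀ u : Fin n → ZMod 3,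
          (fun i => algebraMap (ZMod 3) F (u i)) ∈ B → ∑ i, v i * u i = 0}
      = {v : Fin n → ZMod 3 |
          ∃ w : Fin n → F, (∀ c ∈ B, ∑ i, w i * c i = 0)
            ∧ v = fun i => Algebra.trace (ZMod 3) F (w i)} := by
  classical
  have hFD : FiniteDimensional (ZMod 3) F := Module.Finite.of_finite
  -- embedding of (ZMod 3)-vectors into F-vectors
  set e : (Fin n → ZMod 3) → (Fin n → F) :=
    fun u i => algebraMap (ZMod 3) F (u i) with he
  -- S : the restriction of B to ZMod 3
  set S : Submodule (ZMod 3) (Fin n → ZMod 3) :=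
    { carrier := {u | e u ∈ B}
      add_mem' := by
        intro a b ha hb
        have : e (a + b) = e a + e b := by ext i; simp [he]
        simpa [Set.mem_setOf_eq, this] using B.add_mem ha hb
      zero_mem' := by
        have : e 0 = 0 := by ext i; simp [he]
        simp [Set.mem_setOf_eq, this]
      smul_mem' := by
        intro c a ha
        show e (c • a) ∈ B
        have h : e (c • a) = algebraMap (ZMod 3) F c • e a := by
          ext i; simp [he, Algebra.smul_def]
        rw [h]
        exact B.smul_mem _ ha } with hS
  -- key trace identity
  have hTr : ∀ (u : Fin n → ZMod 3) (w : Fin n → F),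
      ∑ i, u i * Algebra.trace (ZMod 3) F (w i)
        = Algebra.trace (ZMod 3) F (∑ i, w i * e u i) := by
    intro u w
    rw [map_sum]
    refine Finset.sum_congr rfl fun i _ => ?_
    have h1 : w i * e u i = u i • w i := by
      rw [Algebra.smul_def, mul_comm]
    rw [h1, LinearMap.map_smul, smul_eq_mul]
  -- T : the trace of the dual of B
  set T : Submodule (ZMod 3) (Fin n → ZMod 3) :=
    { carrier := {v | ∃ w ∈ dotPerp B, v = fun i => Algebra.trace (ZMod 3) F (w i)}
      add_mem' := by
        rintro a b ⟨wa, hwa, rfl⟩ ⟨wb, hwb, rfl⟩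
        exact ⟨wa + wb, (dotPerp B).add_mem hwa hwb, by ext i; simp⟩
      zero_mem' := ⟨0, (dotPerp B).zero_mem, by ext i; simp⟩
      smul_mem' := by
        rintro c a ⟨wa, hwa, rfl⟩
        refine ⟨algebraMap (ZMod 3) F c • wa, (dotPerp B).smul_mem _ hwa, ?_⟩
        ext i
        have h1 : (algebraMap (ZMod 3) F c • wa) i = c • wa i := by
          simp [Algebra.smul_def]
        rw [Pi.smul_apply, smul_eq_mul, h1, LinearMap.map_smul, smul_eq_mul] } with hT
  -- Claim : S = dotPerp T
  have hST : S = dotPerp T := by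
    apply le_antisymm
    · intro u hu
      rw [mem_dotPerp]
      rintro v ⟨w, hw, rfl⟩
      have h0 : ∑ i, w i * e u i = 0 := hw (e u) hu
      calc ∑ i, u i * Algebra.trace (ZMod 3) F (w i)
          = Algebra.trace (ZMod 3) F (∑ i, w i * e u i) := hTr u w
        _ = 0 := by rw [h0, map_zero]
    · intro u hu
      rw [mem_dotPerp] at hu
      show e u ∈ B
      rw [← dotPerp_dotPerp B, mem_dotPerp]
      intro w hw
      by_contra hne
      obtain ⟨t, ht⟩ := Algebra.trace_surjective (ZMod 3) F 1
      set c : F := ∑ i, e u i * w i with hc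
      have hc' : ∑ i, w i * e u i = c := Finset.sum_congr rfl fun i _ => mul_comm _ _
      set w' : Fin n → F := (t * c⁻¹) • w with hw'
      have hw'B : w' ∈ dotPerp B := (dotPerp B).smul_mem _ hw
      have hsum : ∑ i, w' i * e u i = t := by
        have : ∑ i, w' i * e u i = (t * c⁻¹) * ∑ i, w i * e u i := by
          rw [Finset.mul_sum]
          exact Finset.sum_congr rfl fun i _ => by simp [hw', mul_assoc]
        rw [this, hc', mul_assoc, inv_mul_cancel₀ hne, mul_one]
      have h0 := hu _ ⟨w', hw'B, rfl⟩
      rw [hTr u w', hsum, ht] at h0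
      exact one_ne_zero h0
  -- conclude : dotPerp S = dotPerp (dotPerp T) = T
  have hfinal : dotPerp S = T := by rw [hST, dotPerp_dotPerp]
  ext v
  simp only [Set.mem_setOf_eq]
  constructor
  · intro hv
    have : v ∈ dotPerp S := by
      rw [mem_dotPerp]; intro u hu; exact hv u hu
    rw [hfinal] at this
    obtain ⟨w, hw, rfl⟩ := this
    exact ⟨w, fun c hc => hw c hc, rfl⟩
  · rintro ⟨w, hw, rfl⟩ u hu
    have : (fun i => Algebra.trace (ZMod 3) F (w i)) ∈ T :=
      ⟨w, fun c hc => hw c hc, rfl⟩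
    rw [← hfinal, mem_dotPerp] at this
    exact this u hu
end
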